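/- For the one-interface transmission problem on the disk with radially symmetric data (mode m = 0), the 2×2 modal system [H₀⁽¹⁾(k₀R) , −J₀(k₁R); k₀H₀⁽¹⁾'(k₀R) , −β k₁ J₀'(k₁R)] has nonzero determinant whenever k₀, k₁, R, β > 0; equivalently β k₁ H₀⁽¹⁾(k₀R) J₀'(k₁R) − k₀ H₀⁽¹⁾'(k₀R) J₀(k₁R) ≠ 0 provided J₀(k₁R) and J₀'(k₁R) are not both zero. -/

import Mathlib

/-- Bessel function of the first kind of nonnegative integer order (real
variable), defined by its power series. -/
noncomputable def realBesselJ (m : ℕ) (x : ℝ) : ℝ :=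
  ∑' j : ℕ, (-1 : ℝ) ^ j / ((j.factorial : ℝ) * ((j + m).factorial : ℝ)) * (x / 2) ^ (2 * j + m)

/-- Bessel function of the second kind of nonnegative integer order (real
variable), defined by its standard series expansion involving the
Euler–Mascheroni constant and harmonic numbers. -/
noncomputable def realBesselY (m : ℕ) (x : ℝ) : ℝ :=
  (2 / Real.pi) * (Real.log (x / 2) + Real.eulerMascheroniConstant) * realBesselJ m x
    - (1 / Real.pi) * ∑ j ∈ Finset.range m,
        (((m - j - 1).factorial : ℝ) / (j.factorial : ℝ)) * (x / 2) ^ (2 * (j : ℤ) - (m : ℤ))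
    - (1 / Real.pi) * ∑' j : ℕ,
        (-1 : ℝ) ^ j * (((harmonic j : ℚ) : ℝ) + ((harmonic (j + m) : ℚ) : ℝ))
          / ((j.factorial : ℝ) * ((j + m).factorial : ℝ)) * (x / 2) ^ (2 * j + m)

open Complex

/-- Hankel function of the first kind of integer order (real variable):
`H_m^{(1)} = J_m + i Y_m`. -/
noncomputable def hankel1 (m : ℕ) (x : ℝ) : ℂ :=
  (realBesselJ m x : ℂ) + Complex.I * (realBesselY m x : ℂ)

/-- Derivative of the Hankel function of the first kind:
`H_m^{(1)'} = J_m' + i Y_m'`. -/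
noncomputable def hankel1Deriv (m : ℕ) (x : ℝ) : ℂ :=
  ((deriv (realBesselJ m) x : ℝ) : ℂ) + Complex.I * ((deriv (realBesselY m) x : ℝ) : ℂ)

namespace ModalAux

/-- Coefficients dominated by `M / j!`. -/
def Nice (c : ℕ → ℝ) : Prop := ∃ M : ℝ, ∀ j, |c j| ≤ M / j.factorial

/-- Termwise derivative coefficient sequence. -/
noncomputable def shift (c : ℕ → ℝ) : ℕ → ℝ := fun j => ((j : ℝ) + 1) * c (j + 1)

lemma factorial_succ_cast (j : ℕ) : (((j+1).factorial : ℝ)) = ((j:ℝ)+1) * j.factorial := by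
  push_cast [Nat.factorial_succ]; ring

lemma Nice.shift {c : ℕ → ℝ} (h : Nice c) : Nice (ModalAux.shift c) := by
  obtain ⟨M, hM⟩ := h
  refine ⟨M, fun j => ?_⟩
  have h1 := hM (j + 1)
  have h2 : |ModalAux.shift c j| = ((j:ℝ)+1) * |c (j+1)| := by
    rw [ModalAux.shift, _root_.abs_mul, _root_.abs_of_nonneg (by positivity)]
  rw [h2]
  calc ((j:ℝ)+1) * |c (j+1)| ≤ ((j:ℝ)+1) * (M / (j+1).factorial) := by
        have : (0:ℝ) ≤ (j:ℝ)+1 := by positivity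
        exact mul_le_mul_of_nonneg_left h1 this
    _ = M / j.factorial := by
        rw [factorial_succ_cast]
        have hj : ((j.factorial : ℝ)) ≠ 0 := by positivity
        have hj1 : ((j:ℝ)+1) ≠ 0 := by positivity
        field_simp

lemma summable_mul_id (M r : ℝ) :
    Summable (fun j : ℕ => (j:ℝ) * (M / j.factorial) * r ^ j) := by
  rw [← summable_nat_add_iff 1]
  have he : (fun n : ℕ => ((n+1:ℕ):ℝ) * (M / (n+1).factorial) * r ^ (n+1))
      = fun n : ℕ => (M * r) * (r ^ n / n.factorial) := by
    funext n
    rw [factorial_succ_cast]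
    have hj : ((n.factorial : ℝ)) ≠ 0 := by positivity
    have hj1 : ((n:ℝ)+1) ≠ 0 := by positivity
    push_cast
    field_simp
    ring
  rw [he]
  exact (Real.summable_pow_div_factorial r).mul_left _

lemma Nice.summable {c : ℕ → ℝ} (h : Nice c) (t : ℝ) :
    Summable (fun j : ℕ => c j * t ^ j) := by
  obtain ⟨M, hM⟩ := h
  apply Summable.of_norm_bounded (g := fun j => M / j.factorial * |t| ^ j)
  · have he : (fun j : ℕ => M / j.factorial * |t| ^ j)
        = fun j : ℕ => M * (|t| ^ j / j.factorial) := by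
      funext j; ring
    rw [he]
    exact (Real.summable_pow_div_factorial _).mul_left _
  · intro j
    rw [norm_mul, norm_pow]
    have h1 : ‖c j‖ ≤ M / j.factorial := hM j
    gcongr
    · exact le_trans (norm_nonneg _) h1
    · exact (Real.norm_eq_abs t).le

lemma Nice.summable_id_mul {c : ℕ → ℝ} (h : Nice c) (t : ℝ) :
    Summable (fun j : ℕ => (j:ℝ) * c j * t ^ j) := by
  obtain ⟨M, hM⟩ := h
  apply Summable.of_norm_bounded (g := fun j : ℕ => (j:ℝ) * (M / j.factorial) * |t| ^ j)
    (summable_mul_id M |t|)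
  intro j
  rw [norm_mul, norm_pow, norm_mul]
  have h1 : ‖c j‖ ≤ M / j.factorial := hM j
  have h2 : ‖(j:ℝ)‖ = (j:ℝ) := by simp
  rw [h2]
  gcongr
  · exact mul_nonneg (Nat.cast_nonneg j) (le_trans (norm_nonneg _) h1)
  · exact (Real.norm_eq_abs t).le


lemma Nice.hasDerivAt {c : ℕ → ℝ} (h : Nice c) (t : ℝ) :
    HasDerivAt (fun s => ∑' j : ℕ, c j * s ^ j)
      (∑' j : ℕ, ModalAux.shift c j * t ^ j) t := by
  obtain ⟨M, hM⟩ := h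
  set r : ℝ := |t| + 1 with hr
  have hr1 : (1:ℝ) ≤ r := by have := _root_.abs_nonneg t; simp [hr]
  have hmem : t ∈ Set.Ioo (-r) r := by
    constructor
    · have := neg_abs_le t; linarith
    · have := le_abs_self t; linarith
  have hbd : ∀ (j : ℕ) (y : ℝ), y ∈ Set.Ioo (-r) r →
      ‖c j * ((j:ℝ) * y ^ (j-1))‖ ≤ (j:ℝ) * (M / j.factorial) * r ^ j := by
    intro j y hy
    have hyr : |y| ≤ r := by
      rw [_root_.abs_le]; exact ⟨hy.1.le, hy.2.le⟩
    have h1 : ‖c j * ((j:ℝ) * y ^ (j-1))‖ = (j:ℝ) * |c j| * |y| ^ (j-1) := by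
      rw [norm_mul, norm_mul, norm_pow]
      simp [_root_.abs_of_nonneg, Real.norm_eq_abs]
      ring
    rw [h1]
    have h2 : |y| ^ (j-1) ≤ r ^ j := by
      calc |y| ^ (j-1) ≤ r ^ (j-1) := by
            exact pow_le_pow_left₀ (_root_.abs_nonneg _) hyr _
        _ ≤ r ^ j := pow_le_pow_right₀ hr1 (Nat.sub_le j 1)
    calc (j:ℝ) * |c j| * |y| ^ (j-1) ≤ (j:ℝ) * (M / j.factorial) * (r ^ j) := by
          have := hM j
          have hj0 : (0:ℝ) ≤ (j:ℝ) := by positivity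
          have h0 : (0:ℝ) ≤ |c j| := _root_.abs_nonneg _
          have hM0 : (0:ℝ) ≤ M / j.factorial := le_trans h0 this
          have hy0 : (0:ℝ) ≤ |y| ^ (j-1) := by positivity
          exact mul_le_mul (mul_le_mul_of_nonneg_left this hj0) h2 hy0 (by positivity)
      _ = (j:ℝ) * (M / j.factorial) * r ^ j := rfl
  have hder := hasDerivAt_tsum_of_isPreconnected (summable_mul_id M r)
    isOpen_Ioo (convex_Ioo _ _).isPreconnected
    (g := fun j y => c j * y ^ j) (g' := fun j y => c j * ((j:ℝ) * y ^ (j-1)))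
    (fun j y _ => (hasDerivAt_pow j y).const_mul (c j)) hbd hmem
    (Nice.summable ⟨M, hM⟩ t) hmem
  convert hder using 1
  · rfl
  · rfl
  -- reindex the derivative series
  have hsum' : Summable (fun j : ℕ => c j * ((j:ℝ) * t ^ (j-1))) := by
    apply Summable.of_norm_bounded (summable_mul_id M r)
    intro j; exact hbd j t hmem
  rw [Summable.tsum_eq_zero_add hsum']
  simp only [Nat.cast_zero, zero_mul, mul_zero, zero_add]
  apply tsum_congr
  intro j
  simp only [ModalAux.shift, Nat.add_sub_cancel]
  push_cast
  ring

noncomputable def aJ : ℕ → ℝ := fun j => (-1)^j / ((j.factorial : ℝ) * (j.factorial : ℝ))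

noncomputable def bS : ℕ → ℝ :=
  fun j => (-1)^j * (2 * ((harmonic j : ℚ) : ℝ)) / ((j.factorial : ℝ) * (j.factorial : ℝ))

lemma harmonic_le (j : ℕ) : (harmonic j : ℚ) ≤ j := by
  induction j with
  | zero => simp [harmonic]
  | succ n ih =>
    rw [harmonic_succ]
    have h1 : ((n+1:ℕ):ℚ)⁻¹ ≤ 1 := by
      rw [inv_le_one_iff₀]
      right
      exact_mod_cast Nat.one_le_iff_ne_zero.mpr (Nat.succ_ne_zero n)
    push_cast at ih h1 ⊢
    linarith

lemma nice_aJ : Nice aJ := by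
  refine ⟨1, fun j => ?_⟩
  have h1 : (1:ℝ) ≤ (j.factorial : ℝ) := by exact_mod_cast j.factorial_pos
  have h2 : |aJ j| = 1 / ((j.factorial : ℝ) * (j.factorial : ℝ)) := by
    rw [aJ, _root_.abs_div, _root_.abs_pow, _root_.abs_neg, _root_.abs_one, one_pow]
    congr 1
    rw [_root_.abs_of_nonneg (by positivity)]
  rw [h2]
  rw [div_le_div_iff₀ (by positivity) (by positivity)]
  nlinarith

lemma nice_bS : Nice bS := by
  refine ⟨2, fun j => ?_⟩
  have h1 : (1:ℝ) ≤ (j.factorial : ℝ) := by exact_mod_cast j.factorial_pos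
  have hh0 : (0:ℚ) ≤ harmonic j := by
    rcases Nat.eq_zero_or_pos j with h|h
    · simp [h]
    · exact (harmonic_pos h.ne').le
  have hhle : ((harmonic j : ℚ) : ℝ) ≤ (j:ℝ) := by exact_mod_cast harmonic_le j
  have hjfac : (j:ℝ) ≤ (j.factorial : ℝ) := by exact_mod_cast Nat.self_le_factorial j
  have h2 : |bS j| = (2 * ((harmonic j : ℚ) : ℝ)) / ((j.factorial : ℝ) * (j.factorial : ℝ)) := by
    rw [bS, _root_.abs_div, _root_.abs_mul, _root_.abs_pow, _root_.abs_neg, _root_.abs_one, one_pow, one_mul]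
    congr 1
    · rw [_root_.abs_of_nonneg (by positivity)]
    · rw [_root_.abs_of_nonneg (by positivity)]
  rw [h2, div_le_div_iff₀ (by positivity) (by positivity)]
  have hh : ((harmonic j : ℚ) : ℝ) ≤ (j.factorial : ℝ) := le_trans hhle hjfac
  nlinarith [mul_le_mul_of_nonneg_left hh (by norm_num : (0:ℝ) ≤ 2)]

lemma recJ (j : ℕ) : ((j:ℝ)+1)^2 * aJ (j+1) + aJ j = 0 := by
  have hj : ((j.factorial : ℝ)) ≠ 0 := by positivity
  have hj1 : ((j:ℝ)+1) ≠ 0 := by positivity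
  simp only [aJ, factorial_succ_cast, pow_succ]
  field_simp
  ring

lemma recS (j : ℕ) :
    ((j:ℝ)+1)^2 * bS (j+1) + bS j = 2 * (((j:ℝ)+1) * aJ (j+1)) := by
  have hj : ((j.factorial : ℝ)) ≠ 0 := by positivity
  have hj1 : ((j:ℝ)+1) ≠ 0 := by positivity
  have hh : ((harmonic (j+1) : ℚ) : ℝ) = ((harmonic j : ℚ) : ℝ) + (((j:ℝ)+1))⁻¹ := by
    rw [harmonic_succ]
    push_cast
    ring
  simp only [aJ, bS, factorial_succ_cast, pow_succ, hh]
  field_simp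
  ring

noncomputable def FF (t : ℝ) : ℝ := ∑' j : ℕ, aJ j * t ^ j
noncomputable def FF₁ (t : ℝ) : ℝ := ∑' j : ℕ, shift aJ j * t ^ j
noncomputable def FF₂ (t : ℝ) : ℝ := ∑' j : ℕ, shift (shift aJ) j * t ^ j
noncomputable def GG (t : ℝ) : ℝ := ∑' j : ℕ, bS j * t ^ j
noncomputable def GG₁ (t : ℝ) : ℝ := ∑' j : ℕ, shift bS j * t ^ j
noncomputable def GG₂ (t : ℝ) : ℝ := ∑' j : ℕ, shift (shift bS) j * t ^ j

lemma hasDerivAt_FF (t : ℝ) : HasDerivAt FF (FF₁ t) t := nice_aJ.hasDerivAt t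
lemma hasDerivAt_FF₁ (t : ℝ) : HasDerivAt FF₁ (FF₂ t) t := nice_aJ.shift.hasDerivAt t
lemma hasDerivAt_GG (t : ℝ) : HasDerivAt GG (GG₁ t) t := nice_bS.hasDerivAt t
lemma hasDerivAt_GG₁ (t : ℝ) : HasDerivAt GG₁ (GG₂ t) t := nice_bS.shift.hasDerivAt t

/-- `t * (second-shift sum) = ∑ j * shift c j * t ^ j`. -/
lemma mul_tsum_shift {c : ℕ → ℝ} (h : Nice c) (t : ℝ) :
    t * ∑' j : ℕ, shift (shift c) j * t ^ j = ∑' j : ℕ, (j:ℝ) * shift c j * t ^ j := by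
  rw [← tsum_mul_left]
  rw [Summable.tsum_eq_zero_add (h.shift.summable_id_mul t)]
  simp only [Nat.cast_zero, zero_mul, zero_add]
  apply tsum_congr
  intro j
  simp only [shift]
  push_cast
  ring

lemma odeJ (t : ℝ) : t * FF₂ t + FF₁ t + FF t = 0 := by
  rw [FF₂, mul_tsum_shift nice_aJ, FF₁, FF]
  rw [← Summable.tsum_add (nice_aJ.shift.summable_id_mul t) (nice_aJ.shift.summable t),
    ← Summable.tsum_add ((nice_aJ.shift.summable_id_mul t).add (nice_aJ.shift.summable t))
      (nice_aJ.summable t)]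
  have he : ∀ j : ℕ, (j:ℝ) * shift aJ j * t ^ j + shift aJ j * t ^ j + aJ j * t ^ j = 0 := by
    intro j
    simp only [shift]
    linear_combination (t ^ j) * recJ j
  calc ∑' j : ℕ, ((j:ℝ) * shift aJ j * t ^ j + shift aJ j * t ^ j + aJ j * t ^ j)
      = ∑' _ : ℕ, (0:ℝ) := tsum_congr he
    _ = 0 := tsum_zero

lemma odeS (t : ℝ) : t * GG₂ t + GG₁ t + GG t = 2 * FF₁ t := by
  rw [GG₂, mul_tsum_shift nice_bS, GG₁, GG, FF₁]
  rw [← Summable.tsum_add (nice_bS.shift.summable_id_mul t) (nice_bS.shift.summable t),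
    ← Summable.tsum_add ((nice_bS.shift.summable_id_mul t).add (nice_bS.shift.summable t))
      (nice_bS.summable t), ← tsum_mul_left]
  apply tsum_congr
  intro j
  simp only [shift]
  linear_combination (t ^ j) * recS j

lemma FF_zero : FF 0 = 1 := by
  rw [FF, tsum_eq_single 0]
  · simp [aJ]
  · intro j hj
    simp [zero_pow hj]

noncomputable def PP (t : ℝ) : ℝ := t * (FF t * GG₁ t - FF₁ t * GG t) - (FF t)^2 + 1

lemma hasDerivAt_PP (t : ℝ) : HasDerivAt PP 0 t := by
  have h := (((hasDerivAt_id t).mul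
      (((hasDerivAt_FF t).mul (hasDerivAt_GG₁ t)).sub
        ((hasDerivAt_FF₁ t).mul (hasDerivAt_GG t)))).sub
      ((hasDerivAt_FF t).pow 2)).add_const 1
  convert h using 1
  · rfl
  · rfl
  · rfl
  have h1 := odeJ t
  have h2 := odeS t
  simp only [id, pow_one]
  norm_num
  linear_combination (GG t) * h1 - (FF t) * h2

lemma keyIdentity (t : ℝ) : t * (FF t * GG₁ t - FF₁ t * GG t) = FF t ^ 2 - 1 := by
  have hconst : PP t = PP 0 :=
    is_const_of_deriv_eq_zero (fun x => (hasDerivAt_PP x).differentiableAt)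
      (fun x => (hasDerivAt_PP x).deriv) t 0
  have h0 : PP 0 = 0 := by
    simp [PP, FF_zero]
  rw [h0] at hconst
  simp only [PP] at hconst
  linarith

lemma besselJ_eq (x : ℝ) : realBesselJ 0 x = FF ((x/2)^2) := by
  rw [realBesselJ, FF]
  apply tsum_congr
  intro j
  simp only [add_zero, aJ, ← pow_mul]

lemma besselJ_funext : realBesselJ 0 = fun x => FF ((x/2)^2) := funext besselJ_eq

lemma hasDerivAt_half_sq (x : ℝ) : HasDerivAt (fun x : ℝ => (x/2)^2) (x/2) x := by
  have h := ((hasDerivAt_id x).div_const 2).pow 2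
  convert h using 1
  · rfl
  · rfl
  · rfl
  norm_num
  ring

lemma hasDerivAt_besselJ (x : ℝ) :
    HasDerivAt (realBesselJ 0) (FF₁ ((x/2)^2) * (x/2)) x := by
  rw [besselJ_funext]
  exact (hasDerivAt_FF ((x/2)^2)).comp x (hasDerivAt_half_sq x)

lemma deriv_besselJ (x : ℝ) :
    deriv (realBesselJ 0) x = FF₁ ((x/2)^2) * (x/2) := (hasDerivAt_besselJ x).deriv

lemma besselY_eq (x : ℝ) : realBesselY 0 x =
    (2 / Real.pi) * (Real.log (x/2) + Real.eulerMascheroniConstant) * FF ((x/2)^2)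
      - (1 / Real.pi) * GG ((x/2)^2) := by
  rw [realBesselY, besselJ_eq]
  simp only [Finset.range_zero, Finset.sum_empty, mul_zero, sub_zero]
  congr 1
  rw [GG]
  congr 1
  apply tsum_congr
  intro j
  simp only [add_zero, bS, ← pow_mul]
  ring

lemma besselY_funext : realBesselY 0 = fun x =>
    (2 / Real.pi) * (Real.log (x/2) + Real.eulerMascheroniConstant) * FF ((x/2)^2)
      - (1 / Real.pi) * GG ((x/2)^2) := funext besselY_eq

lemma hasDerivAt_log_half (x : ℝ) (hx : 0 < x) :
    HasDerivAt (fun x : ℝ => Real.log (x/2)) (1/x) x := by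
  have h := (Real.hasDerivAt_log (by positivity : x/2 ≠ 0)).comp x ((hasDerivAt_id x).div_const 2)
  convert h using 1
  · rfl
  · rfl
  · rfl
  field_simp

lemma hasDerivAt_besselY (x : ℝ) (hx : 0 < x) :
    HasDerivAt (realBesselY 0)
      ((2 / Real.pi) * ((1/x) * FF ((x/2)^2)
          + (Real.log (x/2) + Real.eulerMascheroniConstant) * (FF₁ ((x/2)^2) * (x/2)))
        - (1 / Real.pi) * (GG₁ ((x/2)^2) * (x/2))) x := by
  rw [besselY_funext]
  have hF : HasDerivAt (fun x : ℝ => FF ((x/2)^2)) (FF₁ ((x/2)^2) * (x/2)) x := by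
    exact (hasDerivAt_FF ((x/2)^2)).comp x (hasDerivAt_half_sq x)
  have hG : HasDerivAt (fun x : ℝ => GG ((x/2)^2)) (GG₁ ((x/2)^2) * (x/2)) x := by
    exact (hasDerivAt_GG ((x/2)^2)).comp x (hasDerivAt_half_sq x)
  have hL : HasDerivAt (fun x : ℝ => Real.log (x/2) + Real.eulerMascheroniConstant)
      (1/x) x := (hasDerivAt_log_half x hx).add_const _
  have h := ((hL.const_mul (2 / Real.pi)).mul hF).sub (hG.const_mul (1 / Real.pi))
  convert h using 1
  · rfl
  · rfl
  · rfl
  ring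

lemma wronskian (x : ℝ) (hx : 0 < x) :
    realBesselJ 0 x * deriv (realBesselY 0) x
      - deriv (realBesselJ 0) x * realBesselY 0 x = 2 / (Real.pi * x) := by
  have hπ : Real.pi ≠ 0 := Real.pi_ne_zero
  have hx0 : x ≠ 0 := hx.ne'
  rw [deriv_besselJ, (hasDerivAt_besselY x hx).deriv, besselJ_eq, besselY_eq]
  set t := (x/2)^2 with ht
  have key := keyIdentity t
  have key2 : x^2 * (FF t * GG₁ t - FF₁ t * GG t)
      = 4 * (FF t^2 - 1) := by rw [ht]; rw [ht] at key; linear_combination 4 * key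
  field_simp
  linear_combination (-1) * key2

end ModalAux

/-- Nondegeneracy of the `m = 0` modal system for the one-interface
transmission problem on the disk: if `J₀(k₁R)` and `J₀'(k₁R)` are not both
zero, then the determinant
`β k₁ H₀⁽¹⁾(k₀R) J₀'(k₁R) − k₀ H₀⁽¹⁾'(k₀R) J₀(k₁R)` is nonzero. -/
theorem modal_determinant_ne_zero (k₀ k₁ R β : ℝ)
    (hk₀ : 0 < k₀) (hk₁ : 0 < k₁) (hR : 0 < R) (hβ : 0 < β)
    (hnd : ¬(realBesselJ 0 (k₁ * R) = 0 ∧ deriv (realBesselJ 0) (k₁ * R) = 0)) :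
    (β : ℂ) * (k₁ : ℂ) * hankel1 0 (k₀ * R) * ((deriv (realBesselJ 0) (k₁ * R) : ℝ) : ℂ)
        - (k₀ : ℂ) * hankel1Deriv 0 (k₀ * R) * ((realBesselJ 0 (k₁ * R) : ℝ) : ℂ) ≠ 0 := by
  intro hzero
  have hx : 0 < k₀ * R := by positivity
  set A := realBesselJ 0 (k₁ * R) with hA
  set B := deriv (realBesselJ 0) (k₁ * R) with hB
  set J := realBesselJ 0 (k₀ * R) with hJdef
  set J' := deriv (realBesselJ 0) (k₀ * R) with hJ'
  set Y := realBesselY 0 (k₀ * R) with hY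
  set Y' := deriv (realBesselY 0) (k₀ * R) with hY'
  have hW : J * Y' - J' * Y = 2 / (Real.pi * (k₀ * R)) := ModalAux.wronskian _ hx
  have h2 : ((β * k₁ * J * B - k₀ * J' * A : ℝ) : ℂ)
      + Complex.I * ((β * k₁ * Y * B - k₀ * Y' * A : ℝ) : ℂ) = 0 := by
    rw [← hzero]
    simp only [hankel1, hankel1Deriv]
    push_cast
    ring
  have hre : β * k₁ * J * B - k₀ * J' * A = 0 := by
    have := congrArg Complex.re h2
    simpa using this
  have him : β * k₁ * Y * B - k₀ * Y' * A = 0 := by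
    have := congrArg Complex.im h2
    simpa using this
  have hWne : (2 : ℝ) / (Real.pi * (k₀ * R)) ≠ 0 := by positivity
  have hA0 : A = 0 := by
    have h3 : k₀ * A * (J * Y' - J' * Y) = 0 := by linear_combination Y * hre - J * him
    rw [hW] at h3
    rcases mul_eq_zero.mp h3 with h4 | h4
    · rcases mul_eq_zero.mp h4 with h5 | h5
      · exact absurd h5 (by positivity)
      · exact h5
    · exact absurd h4 hWne
  have hB0 : B = 0 := by
    have h3 : β * k₁ * B * (J * Y' - J' * Y) = 0 := by
      linear_combination Y' * hre - J' * him
    rw [hW] at h3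
    rcases mul_eq_zero.mp h3 with h4 | h4
    · rcases mul_eq_zero.mp h4 with h5 | h5
      · rcases mul_eq_zero.mp h5 with h6 | h6
        · exact absurd h6 (by positivity)
        · exact absurd h6 (by positivity)
      · exact h5
    · exact absurd h4 hWne
  exact hnd ⟨hA0, hB0⟩
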